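/- Let S > 0, let U ⊆ (0,S] be Lebesgue measurable, set β(s) := Leb(U ∩ [0,s]), R := β(S), and α(r) := min{s ∈ [0,S] : β(s) = r}. Then for every Borel measurable function g : ℝ → [0,∞] one has the change-of-variables formula ∫_U g(σ) dσ = ∫_{[0,R]} g(α(r)) dr, where both integrals are Lebesgue integrals (with values in [0,∞]). (Equation (5.22) in the proof of Lemma 5.12.) -/

import Mathlib

open MeasureTheory

/-- The function `β(s) := Leb(U ∩ [0,s])`. -/
noncomputable def betaFun (U : Set ℝ) (s : ℝ) : ℝ :=
  (volume (U ∩ Set.Icc 0 s)).toReal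

/-- The "right inverse" `α(r) := min{s ∈ [0,S] : β(s) = r}`. -/
noncomputable def alphaFun (U : Set ℝ) (S : ℝ) (r : ℝ) : ℝ :=
  sInf {s : ℝ | s ∈ Set.Icc 0 S ∧ betaFun U s = r}

open Set

section aux

variable {U : Set ℝ} {S : ℝ}

lemma betaFun_vol_ne_top (U : Set ℝ) (s : ℝ) : volume (U ∩ Set.Icc 0 s) ≠ ⊤ := by
  refine ne_of_lt (lt_of_le_of_lt (measure_mono inter_subset_right) ?_)
  rw [Real.volume_Icc]
  exact ENNReal.ofReal_lt_top

lemma betaFun_mono (U : Set ℝ) : Monotone (betaFun U) := by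
  intro s t hst
  exact ENNReal.toReal_mono (betaFun_vol_ne_top U t)
    (measure_mono (inter_subset_inter_right U (Icc_subset_Icc le_rfl hst)))

lemma betaFun_nonneg (U : Set ℝ) (s : ℝ) : 0 ≤ betaFun U s := ENNReal.toReal_nonneg

lemma betaFun_zero (hUsub : U ⊆ Set.Ioc 0 S) : betaFun U 0 = 0 := by
  have h0 : U ∩ Set.Icc 0 0 = ∅ := by
    rw [Set.Icc_self]
    ext x
    simp only [Set.mem_inter_iff, Set.mem_singleton_iff, Set.mem_empty_iff_false,
      iff_false, not_and]
    intro hx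
    exact ne_of_gt (hUsub hx).1
  rw [betaFun, h0]
  simp

lemma betaFun_le (hUsub : U ⊆ Set.Ioc 0 S) (t : ℝ) : betaFun U t ≤ betaFun U S := by
  have hUS : U ∩ Set.Icc 0 S = U :=
    inter_eq_left.2 fun x hx => ⟨(hUsub hx).1.le, (hUsub hx).2⟩
  refine ENNReal.toReal_mono ?_ (measure_mono ?_)
  · exact betaFun_vol_ne_top U S
  · rw [hUS]; exact inter_subset_left

lemma betaFun_lipschitz (U : Set ℝ) : LipschitzWith 1 (betaFun U) := by
  refine LipschitzWith.of_dist_le_mul fun s t => ?_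
  rw [NNReal.coe_one, one_mul]
  wlog h : t ≤ s generalizing s t
  · rw [dist_comm, dist_comm s t]; exact this t s (le_of_not_ge h)
  rw [Real.dist_eq, Real.dist_eq,
    abs_of_nonneg (sub_nonneg.2 (betaFun_mono U h)), abs_of_nonneg (sub_nonneg.2 h)]
  have key : volume (U ∩ Set.Icc 0 s) ≤ volume (U ∩ Set.Icc 0 t) + ENNReal.ofReal (s - t) := by
    have hsub : U ∩ Set.Icc 0 s ⊆ (U ∩ Set.Icc 0 t) ∪ Set.Ioc t s := by
      rintro x ⟨hxU, hx0, hxs⟩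
      by_cases hxt : x ≤ t
      · exact Or.inl ⟨hxU, hx0, hxt⟩
      · exact Or.inr ⟨lt_of_not_ge hxt, hxs⟩
    calc volume (U ∩ Set.Icc 0 s) ≤ volume ((U ∩ Set.Icc 0 t) ∪ Set.Ioc t s) :=
          measure_mono hsub
      _ ≤ volume (U ∩ Set.Icc 0 t) + volume (Set.Ioc t s) := measure_union_le _ _
      _ = volume (U ∩ Set.Icc 0 t) + ENNReal.ofReal (s - t) := by rw [Real.volume_Ioc]
  have := ENNReal.toReal_mono (by
      exact ENNReal.add_ne_top.2 ⟨betaFun_vol_ne_top U t, ENNReal.ofReal_ne_top⟩) key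
  rw [ENNReal.toReal_add (betaFun_vol_ne_top U t) ENNReal.ofReal_ne_top,
    ENNReal.toReal_ofReal (sub_nonneg.2 h)] at this
  unfold betaFun
  linarith

lemma betaFun_continuous (U : Set ℝ) : Continuous (betaFun U) :=
  (betaFun_lipschitz U).continuous

/-- For `r ∈ [0, R]`, `α r` lies in `[0,S]` and `β (α r) = r`. -/
lemma alphaFun_mem (hS : 0 < S) (hUsub : U ⊆ Set.Ioc 0 S) {r : ℝ}
    (hr : r ∈ Set.Icc 0 (betaFun U S)) :
    alphaFun U S r ∈ Set.Icc 0 S ∧ betaFun U (alphaFun U S r) = r := by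
  set A : Set ℝ := {s : ℝ | s ∈ Set.Icc 0 S ∧ betaFun U s = r} with hA
  have hAne : A.Nonempty := by
    have := intermediate_value_Icc hS.le (betaFun_continuous U).continuousOn
    rw [betaFun_zero hUsub] at this
    obtain ⟨s, hs, hbs⟩ := this hr
    exact ⟨s, hs, hbs⟩
  have hAclosed : IsClosed A := by
    have : A = Set.Icc 0 S ∩ (betaFun U) ⁻¹' {r} := by
      ext x; simp [hA]
    rw [this]
    exact isClosed_Icc.inter (isClosed_singleton.preimage (betaFun_continuous U))
  have hAbdd : BddBelow A := ⟨0, fun x hx => hx.1.1⟩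
  have := hAclosed.csInf_mem hAne hAbdd
  exact ⟨this.1, this.2⟩

lemma alphaFun_le_iff (hS : 0 < S) (hUsub : U ⊆ Set.Ioc 0 S) {r t : ℝ}
    (hr : r ∈ Set.Icc 0 (betaFun U S)) (ht : 0 ≤ t) :
    alphaFun U S r ≤ t ↔ r ≤ betaFun U t := by
  obtain ⟨hmem, hval⟩ := alphaFun_mem hS hUsub hr
  constructor
  · intro h
    calc r = betaFun U (alphaFun U S r) := hval.symm
      _ ≤ betaFun U t := betaFun_mono U h
  · intro h
    by_cases htS : t ≤ S
    · have := intermediate_value_Icc ht (betaFun_continuous U).continuousOn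
      rw [betaFun_zero hUsub] at this
      obtain ⟨s, hs, hbs⟩ := this ⟨hr.1, h⟩
      have : alphaFun U S r ≤ s :=
        csInf_le ⟨0, fun x hx => hx.1.1⟩ ⟨⟨hs.1, hs.2.trans htS⟩, hbs⟩
      exact this.trans hs.2
    · exact hmem.2.trans (le_of_not_ge htS)

/-- The clamped version of `α`, monotone on all of `ℝ`. -/
noncomputable def alphaClamp (U : Set ℝ) (S : ℝ) (r : ℝ) : ℝ :=
  alphaFun U S (max 0 (min r (betaFun U S)))

lemma alphaClamp_eq (hr : r ∈ Set.Icc 0 (betaFun U S)) :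
    alphaClamp U S r = alphaFun U S r := by
  unfold alphaClamp
  rw [min_eq_left hr.2, max_eq_right hr.1]

lemma alphaFun_monoOn (hS : 0 < S) (hUsub : U ⊆ Set.Ioc 0 S) :
    MonotoneOn (alphaFun U S) (Set.Icc 0 (betaFun U S)) := by
  intro r1 hr1 r2 hr2 h12
  obtain ⟨hmem2, hval2⟩ := alphaFun_mem hS hUsub hr2
  obtain ⟨hmem1, _⟩ := alphaFun_mem hS hUsub hr1
  rw [← hval2, ← alphaFun_le_iff hS hUsub hr1 hmem2.1] at h12
  exact h12

lemma alphaClamp_mono (hS : 0 < S) (hUsub : U ⊆ Set.Ioc 0 S) :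
    Monotone (alphaClamp U S) := by
  have hRnn : (0:ℝ) ≤ betaFun U S := betaFun_nonneg U S
  intro r1 r2 h
  unfold alphaClamp
  refine alphaFun_monoOn hS hUsub ?_ ?_ ?_
  · exact ⟨le_max_left _ _, max_le hRnn (min_le_right _ _)⟩
  · exact ⟨le_max_left _ _, max_le hRnn (min_le_right _ _)⟩
  · exact max_le_max le_rfl (min_le_min h le_rfl)

end aux

/-- Change-of-variables formula (equation (5.22) in the proof of Lemma 5.12):
for every Borel function `g : ℝ → [0,∞]`, `∫_U g(σ) dσ = ∫_{[0,R]} g(α(r)) dr`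
with `R = β(S)`. -/
theorem change_of_variables_alpha
    (S : ℝ) (hS : 0 < S) (U : Set ℝ) (hU : MeasurableSet U)
    (hUsub : U ⊆ Set.Ioc 0 S)
    (g : ℝ → ENNReal) (hg : Measurable g) :
    ∫⁻ σ in U, g σ = ∫⁻ r in Set.Icc (0:ℝ) (betaFun U S), g (alphaFun U S r) := by
  set R := betaFun U S with hR
  have hRnn : (0:ℝ) ≤ R := betaFun_nonneg U S
  set h : ℝ → ℝ := alphaClamp U S with hh
  have hmono : Monotone h := alphaClamp_mono hS hUsub
  have hmeas : Measurable h := hmono.measurable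
  set μ : Measure ℝ := volume.restrict (Set.Icc 0 R) with hμ
  have hUS : U ∩ Set.Icc 0 S = U :=
    Set.inter_eq_left.2 fun x hx => ⟨(hUsub hx).1.le, (hUsub hx).2⟩
  have hvolU : volume U ≠ ⊤ := by
    rw [← hUS]; exact betaFun_vol_ne_top U S
  -- the key measure identity
  have key : Measure.map h μ = volume.restrict U := by
    have : IsFiniteMeasure (Measure.map h μ) := by
      constructor
      rw [Measure.map_apply hmeas MeasurableSet.univ]
      simp only [Set.preimage_univ, hμ, Measure.restrict_apply MeasurableSet.univ,
        Set.univ_inter]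
      rw [Real.volume_Icc]
      exact ENNReal.ofReal_lt_top
    refine MeasureTheory.Measure.ext_of_Iic _ _ fun t => ?_
    rw [Measure.map_apply hmeas measurableSet_Iic, hμ,
      Measure.restrict_apply (hmeas measurableSet_Iic),
      Measure.restrict_apply measurableSet_Iic]
    by_cases ht : 0 ≤ t
    · have hset : h ⁻¹' Set.Iic t ∩ Set.Icc 0 R = Set.Icc 0 (betaFun U t) := by
        ext r
        simp only [Set.mem_inter_iff, Set.mem_preimage, Set.mem_Iic, Set.mem_Icc]
        constructor
        · rintro ⟨hle, hr0, hrR⟩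
          refine ⟨hr0, ?_⟩
          rw [hh, alphaClamp_eq ⟨hr0, hrR⟩, alphaFun_le_iff hS hUsub ⟨hr0, hrR⟩ ht] at hle
          exact hle
        · rintro ⟨hr0, hrb⟩
          have hrR : r ≤ R := hrb.trans (betaFun_le hUsub t)
          refine ⟨?_, hr0, hrR⟩
          rw [hh, alphaClamp_eq ⟨hr0, hrR⟩, alphaFun_le_iff hS hUsub ⟨hr0, hrR⟩ ht]
          exact hrb
      have hset2 : Set.Iic t ∩ U = U ∩ Set.Icc 0 t := by
        ext x
        simp only [Set.mem_inter_iff, Set.mem_Iic, Set.mem_Icc]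
        exact ⟨fun ⟨hxt, hxU⟩ => ⟨hxU, (hUsub hxU).1.le, hxt⟩,
          fun ⟨hxU, _, hxt⟩ => ⟨hxt, hxU⟩⟩
      rw [hset, hset2, Real.volume_Icc, sub_zero,
        ← ENNReal.ofReal_toReal (betaFun_vol_ne_top U t)]
      rfl
    · have hset : h ⁻¹' Set.Iic t ∩ Set.Icc 0 R = ∅ := by
        ext r
        simp only [Set.mem_inter_iff, Set.mem_preimage, Set.mem_Iic, Set.mem_Icc,
          Set.mem_empty_iff_false, iff_false, not_and]
        intro hle hr0 hrR
        have := (alphaFun_mem hS hUsub ⟨hr0, hrR⟩).1.1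
        rw [hh, alphaClamp_eq ⟨hr0, hrR⟩] at hle
        exact ht (le_trans this hle)
      have hset2 : Set.Iic t ∩ U = ∅ := by
        ext x
        simp only [Set.mem_inter_iff, Set.mem_Iic, Set.mem_empty_iff_false, iff_false, not_and]
        intro hxt hxU
        exact absurd (lt_of_lt_of_le (hUsub hxU).1 hxt) (not_lt.2 (le_of_not_ge ht))
      rw [hset, hset2]
  calc ∫⁻ σ in U, g σ = ∫⁻ σ, g σ ∂(Measure.map h μ) := by rw [key]
    _ = ∫⁻ r, g (h r) ∂μ := lintegral_map hg hmeas
    _ = ∫⁻ r in Set.Icc (0:ℝ) R, g (alphaFun U S r) := by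
        refine setLIntegral_congr_fun measurableSet_Icc ?_
        exact fun r hr => by simp only [hh, alphaClamp_eq hr]
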